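/- For all p, q ∈ ℕ, the filtration satisfies ⁅𝔇^{(p)}, 𝔇^{(q)}⁆ ⊆ 𝔇^{(p+q)}: if X ∈ 𝔇^{(p)} and Y ∈ 𝔇^{(q)}, then ⁅X, Y⁆ ∈ 𝔇^{(p+q)}. -/
import Mathlib


/-- The ascending filtration `𝔇^{(q)}` of Lie–Bäcklund type associated with a Lie
subalgebra `D` of `L`: `𝔇^{(-1)} = D` (encoded as the base of the recursion) and
`𝔇^{(q)} = {X ∈ L | ⁅Y, X⁆ ∈ 𝔇^{(q-1)} for all Y ∈ D}`. Here `LBfilt D q` is `𝔇^{(q)}`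
for `q ∈ ℕ`. -/
def LBfilt {R : Type*} [CommRing R] {L : Type*} [LieRing L] [LieAlgebra R L]
    (D : LieSubalgebra R L) : ℕ → Set L
  | 0 => {X : L | ∀ Y ∈ D, ⁅Y, X⁆ ∈ D}
  | (q + 1) => {X : L | ∀ Y ∈ D, ⁅Y, X⁆ ∈ LBfilt D q}

/-- Shifted filtration: `W D 0 = D = 𝔇^{(-1)}`, `W D (n+1) = 𝔇^{(n)}`. -/
def LBW {R : Type*} [CommRing R] {L : Type*} [LieRing L] [LieAlgebra R L]
    (D : LieSubalgebra R L) : ℕ → Set L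
  | 0 => (D : Set L)
  | (n + 1) => LBfilt D n

lemma LBW_succ_mem {R : Type*} [CommRing R] {L : Type*} [LieRing L] [LieAlgebra R L]
    (D : LieSubalgebra R L) (n : ℕ) (X : L) :
    X ∈ LBW D (n + 1) ↔ ∀ Y ∈ D, ⁅Y, X⁆ ∈ LBW D n := by
  cases n <;> rfl

lemma LBW_add_mem {R : Type*} [CommRing R] {L : Type*} [LieRing L] [LieAlgebra R L]
    (D : LieSubalgebra R L) : ∀ n : ℕ, ∀ X Y : L, X ∈ LBW D n → Y ∈ LBW D n →
    X + Y ∈ LBW D n := by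
  intro n
  induction n with
  | zero => intro X Y hX hY; exact D.add_mem hX hY
  | succ n ih =>
    intro X Y hX hY
    rw [LBW_succ_mem] at *
    intro Z hZ
    rw [lie_add]
    exact ih _ _ (hX Z hZ) (hY Z hZ)

lemma LBW_neg_mem {R : Type*} [CommRing R] {L : Type*} [LieRing L] [LieAlgebra R L]
    (D : LieSubalgebra R L) : ∀ n : ℕ, ∀ X : L, X ∈ LBW D n → -X ∈ LBW D n := by
  intro n
  induction n with
  | zero => intro X hX; exact D.neg_mem hX
  | succ n ih =>
    intro X hX
    rw [LBW_succ_mem] at *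
    intro Z hZ
    rw [lie_neg]
    exact ih _ (hX Z hZ)

lemma LBW_bracket {R : Type*} [CommRing R] {L : Type*} [LieRing L] [LieAlgebra R L]
    (D : LieSubalgebra R L) : ∀ n a b : ℕ, a + b ≤ n →
    ∀ X ∈ LBW D a, ∀ Y ∈ LBW D b, ⁅X, Y⁆ ∈ LBW D (a + b - 1) := by
  intro n
  induction n with
  | zero =>
    intro a b hab X hX Y hY
    obtain ⟨rfl, rfl⟩ : a = 0 ∧ b = 0 := by omega
    exact D.lie_mem hX hY
  | succ n ih =>
    intro a b hab X hX Y hY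
    match a, b with
    | 0, 0 => exact D.lie_mem hX hY
    | 0, k + 1 =>
      simpa using (LBW_succ_mem D k Y).mp hY X hX
    | j + 1, 0 =>
      have h : ⁅Y, X⁆ ∈ LBW D j := (LBW_succ_mem D j X).mp hX Y hY
      have := LBW_neg_mem D j _ h
      rw [← lie_skew] at this
      simpa using this
    | j + 1, k + 1 =>
      have heq : j + 1 + (k + 1) - 1 = (j + k) + 1 := by omega
      rw [heq, LBW_succ_mem]
      intro Z hZ
      have hL : ⁅Z, X⁆ ∈ LBW D j := (LBW_succ_mem D j X).mp hX Z hZ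
      have hR : ⁅Z, Y⁆ ∈ LBW D k := (LBW_succ_mem D k Y).mp hY Z hZ
      have h1 : ⁅⁅Z, X⁆, Y⁆ ∈ LBW D (j + k) := by
        have := ih j (k + 1) (by omega) _ hL _ hY
        rwa [show j + (k + 1) - 1 = j + k from by omega] at this
      have h2 : ⁅X, ⁅Z, Y⁆⁆ ∈ LBW D (j + k) := by
        have := ih (j + 1) k (by omega) _ hX _ hR
        rwa [show j + 1 + k - 1 = j + k from by omega] at this
      rw [leibniz_lie]
      exact LBW_add_mem D _ _ _ h1 h2

/-- For all `p q ∈ ℕ`, `⁅𝔇^{(p)}, 𝔇^{(q)}⁆ ⊆ 𝔇^{(p+q)}`. -/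
theorem LBfilt_bracket_mem {R : Type*} [CommRing R] {L : Type*} [LieRing L] [LieAlgebra R L]
    (D : LieSubalgebra R L) :
    ∀ p q : ℕ, ∀ X ∈ LBfilt D p, ∀ Y ∈ LBfilt D q, ⁅X, Y⁆ ∈ LBfilt D (p + q) := by
  intro p q X hX Y hY
  have := LBW_bracket D (p + 1 + (q + 1)) (p + 1) (q + 1) le_rfl X hX Y hY
  have heq : p + 1 + (q + 1) - 1 = (p + q) + 1 := by omega
  rw [heq] at this
  exact this
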